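/- For every t > 0, every c > 0, and every real r with 0 < r < 2, there exists K < ∞ such that for every real m ≥ 1, setting θ := ⌊m² t⌋, the lazy random walk of length θ started at 0 satisfies E[ exp( c · (R_θ / m)^r ) ] ≤ K, where R_θ := max_{0 ≤ u ≤ θ} S(u) − min_{0 ≤ u ≤ θ} S(u) is the range of the path. -/

import Mathlib

open scoped Classical

/-- The lazy random walk path of length `θ` started at `x`: increments are encoded by
`ω : Fin θ → Fin 3`, where the value `i ∈ {0,1,2}` encodes the increment `i - 1 ∈ {-1,0,1}`.
`lazyPath θ x ω u` is the position after `u` steps (for `0 ≤ u ≤ θ`). -/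
def lazyPath (θ : ℕ) (x : ℤ) (ω : Fin θ → Fin 3) (u : ℕ) : ℤ :=
  x + ∑ j : Fin θ, if (j : ℕ) < u then ((ω j : ℤ) - 1) else 0

/-- Vertex-occupation measure `Λ^a_θ = #{0 ≤ j ≤ θ : S(j) = a}`. -/
def vertexOcc (θ : ℕ) (x : ℤ) (ω : Fin θ → Fin 3) (a : ℤ) : ℕ :=
  ((Finset.range (θ + 1)).filter (fun j => lazyPath θ x ω j = a)).card

/-- Edge-occupation measure `Λ^{(a,b)}_θ = #{0 ≤ u ≤ θ-1 : S(u) = a, S(u+1) = b}`. -/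
def edgeOcc (θ : ℕ) (x : ℤ) (ω : Fin θ → Fin 3) (a b : ℤ) : ℕ :=
  ((Finset.range θ).filter
    (fun u => lazyPath θ x ω u = a ∧ lazyPath θ x ω (u + 1) = b)).card

/-- The range `R_θ = max_{0 ≤ u ≤ θ} S(u) − min_{0 ≤ u ≤ θ} S(u)` of the path. -/
def pathRange (θ : ℕ) (x : ℤ) (ω : Fin θ → Fin 3) : ℤ :=
  ((Finset.range (θ + 1)).sup' Finset.nonempty_range_add_one (fun u => lazyPath θ x ω u))
    - ((Finset.range (θ + 1)).inf' Finset.nonempty_range_add_one (fun u => lazyPath θ x ω u))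

namespace RangeAux

open Finset Real

variable {θ : ℕ}

/-- Sum of increments over a set of coordinates. -/
def X (T : Finset (Fin θ)) (ω : Fin θ → Fin 3) : ℤ := ∑ j ∈ T, ((ω j : ℤ) - 1)

lemma exp_eq_prod (T : Finset (Fin θ)) (l : ℝ) (ω : Fin θ → Fin 3) :
    Real.exp (l * ((X T ω : ℤ) : ℝ))
      = ∏ j : Fin θ, (if j ∈ T then Real.exp (l * (((ω j : ℕ) : ℝ) - 1)) else 1) := by
  rw [Finset.prod_ite_mem, Finset.univ_inter, ← Real.exp_sum]
  congr 1
  rw [X]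
  push_cast
  rw [Finset.mul_sum]

lemma mgf_le (T : Finset (Fin θ)) (l : ℝ) :
    ∑ ω : Fin θ → Fin 3, Real.exp (l * ((X T ω : ℤ) : ℝ))
      ≤ 3 ^ θ * Real.exp (l ^ 2 * θ / 2) := by
  have key : ∀ j : Fin θ, (∑ x : Fin 3, (if j ∈ T then Real.exp (l * (((x : ℕ) : ℝ) - 1)) else 1))
      ≤ 3 * Real.exp (l ^ 2 / 2) := by
    intro j
    rw [Fin.sum_univ_three]
    have hexp1 : (1:ℝ) ≤ Real.exp (l ^ 2 / 2) := by
      rw [show (1:ℝ) = Real.exp 0 by simp]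
      exact Real.exp_le_exp.2 (by positivity)
    by_cases hj : j ∈ T
    · rw [if_pos hj, if_pos hj, if_pos hj]
      have h0 : (((0 : Fin 3) : ℕ) : ℝ) = 0 := by norm_num
      have h1 : (((1 : Fin 3) : ℕ) : ℝ) = 1 := by norm_num
      have h2 : (((2 : Fin 3) : ℕ) : ℝ) = 2 := by norm_num
      rw [h0, h1, h2]
      have e1 : l * ((0:ℝ) - 1) = -l := by ring
      have e2 : l * ((1:ℝ) - 1) = 0 := by ring
      have e3 : l * ((2:ℝ) - 1) = l := by ring
      rw [e1, e2, e3, Real.exp_zero]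
      have hcosh : Real.exp (-l) + Real.exp l = 2 * Real.cosh l := by
        rw [Real.cosh_eq]; ring
      have h1le : (1:ℝ) ≤ Real.cosh l := Real.one_le_cosh l
      have hc2 : Real.cosh l ≤ Real.exp (l ^ 2 / 2) := Real.cosh_le_exp_half_sq l
      nlinarith
    · rw [if_neg hj, if_neg hj, if_neg hj]
      nlinarith
  calc ∑ ω : Fin θ → Fin 3, Real.exp (l * ((X T ω : ℤ) : ℝ))
      = ∑ ω : Fin θ → Fin 3, ∏ j : Fin θ,
          (if j ∈ T then Real.exp (l * (((ω j : ℕ) : ℝ) - 1)) else 1) :=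
        Finset.sum_congr rfl fun ω _ => exp_eq_prod T l ω
    _ = ∏ j : Fin θ, ∑ x : Fin 3, (if j ∈ T then Real.exp (l * (((x : ℕ) : ℝ) - 1)) else 1) :=
        (Fintype.prod_sum (κ := fun _ : Fin θ => Fin 3)
          (f := fun j x => if j ∈ T then Real.exp (l * (((x : ℕ) : ℝ) - 1)) else 1)).symm
    _ ≤ ∏ _j : Fin θ, (3 * Real.exp (l ^ 2 / 2)) := by
        apply Finset.prod_le_prod
        · intro j _
          apply Finset.sum_nonneg
          intro x _
          by_cases hj : j ∈ T
          · rw [if_pos hj]; exact (Real.exp_nonneg _)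
          · rw [if_neg hj]; exact zero_le_one
        · intro j _; exact key j
    _ = 3 ^ θ * Real.exp (l ^ 2 * θ / 2) := by
        rw [Finset.prod_const, Finset.card_univ, Fintype.card_fin, mul_pow,
          ← Real.exp_nat_mul]
        ring_nf

lemma chernoff_one (T : Finset (Fin θ)) (hθ : 0 < θ) (b : ℝ) (hb : 0 ≤ b) (s : ℝ)
    (hs : s = 1 ∨ s = -1) :
    (((univ : Finset (Fin θ → Fin 3)).filter fun ω => b ≤ s * ((X T ω : ℤ) : ℝ)).card : ℝ)
      ≤ 3 ^ θ * Real.exp (-(b ^ 2) / (2 * θ)) := by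
  set l : ℝ := b / θ with hl
  have hθR : (0:ℝ) < θ := by exact_mod_cast hθ
  have hl0 : 0 ≤ l := div_nonneg hb hθR.le
  have step1 : (((univ : Finset (Fin θ → Fin 3)).filter
        fun ω => b ≤ s * ((X T ω : ℤ) : ℝ)).card : ℝ)
      ≤ ∑ ω : Fin θ → Fin 3, Real.exp ((l * s) * ((X T ω : ℤ) : ℝ) - l * b) := by
    rw [Finset.card_eq_sum_ones]
    push_cast
    refine le_trans (Finset.sum_le_sum ?_) (Finset.sum_le_sum_of_subset_of_nonneg
      (Finset.filter_subset _ _) (fun ω _ _ => (Real.exp_nonneg _)))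
    intro ω hω
    rw [Finset.mem_filter] at hω
    have : (0:ℝ) ≤ (l * s) * ((X T ω : ℤ) : ℝ) - l * b := by
      have : l * b ≤ l * (s * ((X T ω : ℤ) : ℝ)) := mul_le_mul_of_nonneg_left hω.2 hl0
      nlinarith [this]
    calc (1:ℝ) = Real.exp 0 := by simp
      _ ≤ _ := Real.exp_le_exp.2 this
  have step2 : ∑ ω : Fin θ → Fin 3, Real.exp ((l * s) * ((X T ω : ℤ) : ℝ) - l * b)
      ≤ Real.exp (-(l*b)) * (3 ^ θ * Real.exp ((l*s) ^ 2 * θ / 2)) := by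
    have : ∀ ω : Fin θ → Fin 3, Real.exp ((l * s) * ((X T ω : ℤ) : ℝ) - l * b)
        = Real.exp (-(l*b)) * Real.exp ((l*s) * ((X T ω : ℤ) : ℝ)) := by
      intro ω; rw [← Real.exp_add]; ring_nf
    rw [Finset.sum_congr rfl fun ω _ => this ω, ← Finset.mul_sum]
    exact mul_le_mul_of_nonneg_left (mgf_le T (l*s)) (Real.exp_nonneg _)
  have hs2 : s ^ 2 = 1 := by rcases hs with h | h <;> rw [h] <;> norm_num
  calc _ ≤ _ := step1
    _ ≤ _ := step2
    _ = _ := by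
      rw [mul_comm (Real.exp (-(l*b))), mul_assoc, ← Real.exp_add]
      congr 1
      have : (l*s)^2 = l^2 := by rw [mul_pow, hs2, mul_one]
      rw [this, hl]
      field_simp
      ring

lemma chernoff_abs (T : Finset (Fin θ)) (hθ : 0 < θ) (b : ℝ) (hb : 0 ≤ b) :
    (((univ : Finset (Fin θ → Fin 3)).filter fun ω => b ≤ |((X T ω : ℤ) : ℝ)|).card : ℝ)
      ≤ 2 * 3 ^ θ * Real.exp (-(b ^ 2) / (2 * θ)) := by
  have hsub : ((univ : Finset (Fin θ → Fin 3)).filter fun ω => b ≤ |((X T ω : ℤ) : ℝ)|)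
      ⊆ ((univ : Finset (Fin θ → Fin 3)).filter fun ω => b ≤ 1 * ((X T ω : ℤ) : ℝ))
        ∪ ((univ : Finset (Fin θ → Fin 3)).filter fun ω => b ≤ (-1) * ((X T ω : ℤ) : ℝ)) := by
    intro ω hω
    rw [Finset.mem_filter] at hω
    rw [Finset.mem_union, Finset.mem_filter, Finset.mem_filter]
    rcases le_abs.1 hω.2 with h | h
    · exact Or.inl ⟨hω.1, by linarith⟩
    · exact Or.inr ⟨hω.1, by linarith⟩
  calc (((univ : Finset (Fin θ → Fin 3)).filter fun ω => b ≤ |((X T ω : ℤ) : ℝ)|).card : ℝ)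
      ≤ ((((univ : Finset (Fin θ → Fin 3)).filter fun ω => b ≤ 1 * ((X T ω : ℤ) : ℝ))
        ∪ ((univ : Finset (Fin θ → Fin 3)).filter fun ω => b ≤ (-1) * ((X T ω : ℤ) : ℝ))).card : ℝ) := by
        exact_mod_cast Finset.card_le_card hsub
    _ ≤ (((univ : Finset (Fin θ → Fin 3)).filter fun ω => b ≤ 1 * ((X T ω : ℤ) : ℝ)).card : ℝ)
        + (((univ : Finset (Fin θ → Fin 3)).filter fun ω => b ≤ (-1) * ((X T ω : ℤ) : ℝ)).card : ℝ) := by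
        exact_mod_cast Finset.card_union_le _ _
    _ ≤ 3 ^ θ * Real.exp (-(b ^ 2) / (2 * θ)) + 3 ^ θ * Real.exp (-(b ^ 2) / (2 * θ)) :=
        add_le_add (chernoff_one T hθ b hb 1 (Or.inl rfl))
          (chernoff_one T hθ b hb (-1) (Or.inr rfl))
    _ = 2 * 3 ^ θ * Real.exp (-(b ^ 2) / (2 * θ)) := by ring

def splice (u : ℕ) (ω ω' : Fin θ → Fin 3) : Fin θ → Fin 3 :=
  fun j => if (j : ℕ) < u then ω j else ω' j

lemma splice_splice (u : ℕ) (a b : Fin θ → Fin 3) :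
    splice u (splice u a b) (splice u b a) = a := by
  funext j
  by_cases h : (j : ℕ) < u <;> simp [splice, h]

lemma indep_card (u : ℕ) (P Q : (Fin θ → Fin 3) → Prop)
    (hP : ∀ ω ω' : Fin θ → Fin 3, (∀ j : Fin θ, (j : ℕ) < u → ω j = ω' j) → P ω → P ω')
    (hQ : ∀ ω ω' : Fin θ → Fin 3, (∀ j : Fin θ, ¬ (j : ℕ) < u → ω j = ω' j) → Q ω → Q ω') :
    ((univ : Finset (Fin θ → Fin 3)).filter fun ω => P ω ∧ Q ω).card * 3 ^ θ
      = ((univ : Finset (Fin θ → Fin 3)).filter P).card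
        * ((univ : Finset (Fin θ → Fin 3)).filter Q).card := by
  have hcard : (univ : Finset (Fin θ → Fin 3)).card = 3 ^ θ := by
    simp [Finset.card_univ]
  have key : ((((univ : Finset (Fin θ → Fin 3)).filter fun ω => P ω ∧ Q ω)
        ×ˢ (univ : Finset (Fin θ → Fin 3))).card)
      = (((univ : Finset (Fin θ → Fin 3)).filter P)
        ×ˢ ((univ : Finset (Fin θ → Fin 3)).filter Q)).card := by
    refine Finset.card_bij' (fun p _ => (splice u p.1 p.2, splice u p.2 p.1))
      (fun q _ => (splice u q.1 q.2, splice u q.2 q.1)) ?hi ?hj ?left ?right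
    case hi =>
      rintro ⟨a, b⟩ hab
      rw [Finset.mem_product, Finset.mem_filter] at hab
      obtain ⟨⟨-, hPa, hQa⟩, -⟩ := hab
      rw [Finset.mem_product, Finset.mem_filter, Finset.mem_filter]
      constructor
      · exact ⟨Finset.mem_univ _, hP a _ (fun j hj => by simp [splice, hj]) hPa⟩
      · exact ⟨Finset.mem_univ _, hQ a _ (fun j hj => by simp [splice, hj]) hQa⟩
    case hj =>
      rintro ⟨a, b⟩ hab
      rw [Finset.mem_product, Finset.mem_filter, Finset.mem_filter] at hab
      obtain ⟨⟨-, hPa⟩, -, hQb⟩ := hab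
      rw [Finset.mem_product, Finset.mem_filter]
      refine ⟨⟨Finset.mem_univ _, ?_, ?_⟩, Finset.mem_univ _⟩
      · exact hP a _ (fun j hj => by simp [splice, hj]) hPa
      · exact hQ b _ (fun j hj => by simp [splice, hj]) hQb
    case left =>
      rintro ⟨a, b⟩ -
      simp only [Prod.mk.injEq]
      exact ⟨splice_splice u a b, splice_splice u b a⟩
    case right =>
      rintro ⟨a, b⟩ -
      simp only [Prod.mk.injEq]
      exact ⟨splice_splice u a b, splice_splice u b a⟩
  rw [Finset.card_product, Finset.card_product, hcard] at key
  exact key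

def Tlt (θ u : ℕ) : Finset (Fin θ) := univ.filter fun j => (j : ℕ) < u
def Tge (θ u : ℕ) : Finset (Fin θ) := univ.filter fun j => ¬ (j : ℕ) < u

lemma X_split (u : ℕ) (ω : Fin θ → Fin 3) :
    X (Tlt θ θ) ω = X (Tlt θ u) ω + X (Tge θ u) ω := by
  have huniv : Tlt θ θ = (univ : Finset (Fin θ)) := by
    rw [Tlt, Finset.filter_true_of_mem]
    intro j _; exact j.isLt
  rw [huniv, X, X, X, Tlt, Tge]
  exact (Finset.sum_filter_add_sum_filter_not _ _ _).symm

lemma X_Tlt_congr (u v : ℕ) (hvu : v ≤ u) (ω ω' : Fin θ → Fin 3)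
    (h : ∀ j : Fin θ, (j : ℕ) < u → ω j = ω' j) :
    X (Tlt θ v) ω = X (Tlt θ v) ω' := by
  apply Finset.sum_congr rfl
  intro j hj
  rw [Tlt, Finset.mem_filter] at hj
  rw [h j (lt_of_lt_of_le hj.2 hvu)]

lemma etemadi (hθ : 0 < θ) (b : ℝ) (hb : 0 ≤ b) :
    (((univ : Finset (Fin θ → Fin 3)).filter fun ω =>
        ∃ u, u ≤ θ ∧ 3 * b ≤ |((X (Tlt θ u) ω : ℤ) : ℝ)|).card : ℝ)
      ≤ 4 * 3 ^ θ * Real.exp (-(b ^ 2) / (2 * θ)) := by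
  set e : ℝ := Real.exp (-(b ^ 2) / (2 * θ)) with he
  have he0 : 0 ≤ e := Real.exp_nonneg _
  set p : ℕ → (Fin θ → Fin 3) → Prop :=
    fun u ω => 3 * b ≤ |((X (Tlt θ u) ω : ℤ) : ℝ)| with hp
  set A : ℕ → Finset (Fin θ → Fin 3) := fun u =>
    univ.filter (fun ω => p u ω ∧ ∀ v, v < u → ¬ p v ω) with hA
  set B : Finset (Fin θ → Fin 3) :=
    univ.filter (fun ω => b ≤ |((X (Tlt θ θ) ω : ℤ) : ℝ)|) with hB
  set C : ℕ → Finset (Fin θ → Fin 3) := fun u =>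
    univ.filter (fun ω => (p u ω ∧ ∀ v, v < u → ¬ p v ω)
      ∧ 2 * b ≤ |((X (Tge θ u) ω : ℤ) : ℝ)|) with hC
  -- the event is covered by the disjoint pieces A u
  have hEsub : ((univ : Finset (Fin θ → Fin 3)).filter fun ω =>
      ∃ u, u ≤ θ ∧ 3 * b ≤ |((X (Tlt θ u) ω : ℤ) : ℝ)|) ⊆ (Finset.range (θ+1)).biUnion A := by
    intro ω hω
    rw [Finset.mem_filter] at hω
    obtain ⟨-, u, hu, hpu⟩ := hω
    have hex : ∃ v, p v ω := ⟨u, hpu⟩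
    rw [Finset.mem_biUnion]
    refine ⟨Nat.find hex, ?_, ?_⟩
    · rw [Finset.mem_range]
      exact Nat.lt_succ_of_le (le_trans (Nat.find_min' hex hpu) hu)
    · rw [hA, Finset.mem_filter]
      exact ⟨Finset.mem_univ _, Nat.find_spec hex, fun v hv => Nat.find_min hex hv⟩
  have hdisj : ∀ u ∈ Finset.range (θ+1), ∀ v ∈ Finset.range (θ+1),
      u ≠ v → Disjoint (A u) (A v) := by
    have key : ∀ u v, u < v → Disjoint (A u) (A v) := by
      intro u v huv
      rw [Finset.disjoint_left]
      intro ω hωu hωv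
      rw [hA, Finset.mem_filter] at hωu hωv
      exact hωv.2.2 u huv hωu.2.1
    intro u _ v _ huv
    rcases lt_or_gt_of_ne huv with h | h
    · exact key u v h
    · exact (key v u h).symm
  have hsum_le : (∑ u ∈ Finset.range (θ+1), ((A u).card : ℝ)) ≤ 3 ^ θ := by
    have : ∑ u ∈ Finset.range (θ+1), (A u).card ≤ 3 ^ θ := by
      rw [← Finset.card_biUnion hdisj]
      calc ((Finset.range (θ+1)).biUnion A).card
          ≤ (univ : Finset (Fin θ → Fin 3)).card :=
            Finset.card_le_card (Finset.subset_univ _)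
        _ = 3 ^ θ := by simp
    exact_mod_cast this
  -- covering of each A u
  have hcover : ∀ u, A u ⊆ (A u ∩ B) ∪ C u := by
    intro u ω hω
    by_cases hBω : ω ∈ B
    · exact Finset.mem_union_left _ (Finset.mem_inter.2 ⟨hω, hBω⟩)
    · apply Finset.mem_union_right
      rw [hA, Finset.mem_filter] at hω
      rw [hC, Finset.mem_filter]
      refine ⟨Finset.mem_univ _, hω.2, ?_⟩
      have h1 : 3 * b ≤ |((X (Tlt θ u) ω : ℤ) : ℝ)| := hω.2.1
      have h2 : ¬ (b ≤ |((X (Tlt θ θ) ω : ℤ) : ℝ)|) := by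
        rw [hB, Finset.mem_filter] at hBω
        intro hcon; exact hBω ⟨Finset.mem_univ _, hcon⟩
      push_neg at h2
      have hsp : ((X (Tge θ u) ω : ℤ) : ℝ)
          = ((X (Tlt θ θ) ω : ℤ) : ℝ) - ((X (Tlt θ u) ω : ℤ) : ℝ) := by
        have := X_split u ω
        push_cast [this]
        ring
      have habs : |((X (Tlt θ u) ω : ℤ) : ℝ)| - |((X (Tlt θ θ) ω : ℤ) : ℝ)|
          ≤ |((X (Tge θ u) ω : ℤ) : ℝ)| := by
        rw [hsp]
        have := abs_sub_abs_le_abs_sub ((X (Tlt θ u) ω : ℤ) : ℝ) ((X (Tlt θ θ) ω : ℤ) : ℝ)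
        have habs2 : |((X (Tlt θ u) ω : ℤ) : ℝ) - ((X (Tlt θ θ) ω : ℤ) : ℝ)|
            = |((X (Tlt θ θ) ω : ℤ) : ℝ) - ((X (Tlt θ u) ω : ℤ) : ℝ)| := abs_sub_comm _ _
        linarith [this, habs2.le, habs2.ge]
      linarith
  -- bound on C u via independence and Chernoff
  have hCbound : ∀ u, ((C u).card : ℝ) ≤ ((A u).card : ℝ) * (2 * e) := by
    intro u
    have hkey := indep_card u (fun ω => p u ω ∧ ∀ v, v < u → ¬ p v ω)
      (fun ω => 2 * b ≤ |((X (Tge θ u) ω : ℤ) : ℝ)|) ?_ ?_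
    · have hQle : (((univ : Finset (Fin θ → Fin 3)).filter
          (fun ω => 2 * b ≤ |((X (Tge θ u) ω : ℤ) : ℝ)|)).card : ℝ)
          ≤ 2 * 3 ^ θ * e := by
        have h1 := chernoff_abs (Tge θ u) hθ (2 * b) (by linarith)
        have hθR : (0:ℝ) < θ := by exact_mod_cast hθ
        have h2 : Real.exp (-((2*b) ^ 2) / (2 * θ)) ≤ e := by
          rw [he]
          apply Real.exp_le_exp.2
          apply div_le_div_of_nonneg_right ?_ (by positivity)
          nlinarith
        calc _ ≤ 2 * 3 ^ θ * Real.exp (-((2*b) ^ 2) / (2 * θ)) := h1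
          _ ≤ 2 * 3 ^ θ * e := by
              apply mul_le_mul_of_nonneg_left h2 (by positivity)
      have hkeyR : ((C u).card : ℝ) * 3 ^ θ
          = ((A u).card : ℝ) * (((univ : Finset (Fin θ → Fin 3)).filter
            (fun ω => 2 * b ≤ |((X (Tge θ u) ω : ℤ) : ℝ)|)).card : ℝ) := by
        have hkeyN : (C u).card * 3 ^ θ
            = (A u).card * (((univ : Finset (Fin θ → Fin 3)).filter
              (fun ω => 2 * b ≤ |((X (Tge θ u) ω : ℤ) : ℝ)|)).card) := by
          convert hkey using 5
        exact_mod_cast hkeyN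
      have h3pos : (0:ℝ) < 3 ^ θ := by positivity
      have hfin : ((C u).card : ℝ) * 3 ^ θ ≤ (((A u).card : ℝ) * (2 * e)) * 3 ^ θ := by
        rw [hkeyR]
        calc ((A u).card : ℝ) * (((univ : Finset (Fin θ → Fin 3)).filter
              (fun ω => 2 * b ≤ |((X (Tge θ u) ω : ℤ) : ℝ)|)).card : ℝ)
            ≤ ((A u).card : ℝ) * (2 * 3 ^ θ * e) :=
              mul_le_mul_of_nonneg_left hQle (Nat.cast_nonneg _)
          _ = (((A u).card : ℝ) * (2 * e)) * 3 ^ θ := by ring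
      exact le_of_mul_le_mul_right hfin h3pos
    · intro ω ω' hagree hPω
      obtain ⟨h1', h2'⟩ := hPω
      constructor
      · show 3 * b ≤ |((X (Tlt θ u) ω' : ℤ) : ℝ)|
        rw [← X_Tlt_congr u u le_rfl ω ω' hagree]
        exact h1'
      · intro v hv hcon
        apply h2' v hv
        show 3 * b ≤ |((X (Tlt θ v) ω : ℤ) : ℝ)|
        rw [X_Tlt_congr u v (le_of_lt hv) ω ω' hagree]
        exact hcon
    · intro ω ω' hagree hQω
      have : X (Tge θ u) ω = X (Tge θ u) ω' := by
        apply Finset.sum_congr rfl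
        intro j hj
        rw [Tge, Finset.mem_filter] at hj
        rw [hagree j hj.2]
      rw [← this]
      exact hQω
  -- bound on B via Chernoff
  have hBcard : (B.card : ℝ) ≤ 2 * 3 ^ θ * e := chernoff_abs (Tlt θ θ) hθ b hb
  -- sum of A u ∩ B cards bounded by B
  have hABsum : (∑ u ∈ Finset.range (θ+1), (((A u ∩ B)).card : ℝ)) ≤ (B.card : ℝ) := by
    have hd : ∀ u ∈ Finset.range (θ+1), ∀ v ∈ Finset.range (θ+1), u ≠ v →
        Disjoint (A u ∩ B) (A v ∩ B) := fun u hu v hv huv =>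
      (hdisj u hu v hv huv).mono Finset.inter_subset_left Finset.inter_subset_left
    have hN : ∑ u ∈ Finset.range (θ+1), (A u ∩ B).card ≤ B.card := by
      rw [← Finset.card_biUnion hd]
      apply Finset.card_le_card
      intro ω hω
      rw [Finset.mem_biUnion] at hω
      obtain ⟨u, -, hωu⟩ := hω
      exact (Finset.mem_inter.1 hωu).2
    exact_mod_cast hN
  calc (((univ : Finset (Fin θ → Fin 3)).filter fun ω =>
        ∃ u, u ≤ θ ∧ 3 * b ≤ |((X (Tlt θ u) ω : ℤ) : ℝ)|).card : ℝ)
      ≤ (((Finset.range (θ+1)).biUnion A).card : ℝ) := by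
        exact_mod_cast Finset.card_le_card hEsub
    _ = ∑ u ∈ Finset.range (θ+1), ((A u).card : ℝ) := by
        rw [Finset.card_biUnion hdisj]; push_cast; rfl
    _ ≤ ∑ u ∈ Finset.range (θ+1), ((((A u ∩ B)).card : ℝ) + ((C u).card : ℝ)) := by
        apply Finset.sum_le_sum
        intro u _
        have : (A u).card ≤ (A u ∩ B).card + (C u).card :=
          le_trans (Finset.card_le_card (hcover u)) (Finset.card_union_le _ _)
        exact_mod_cast this
    _ = (∑ u ∈ Finset.range (θ+1), (((A u ∩ B)).card : ℝ))
        + ∑ u ∈ Finset.range (θ+1), ((C u).card : ℝ) := Finset.sum_add_distrib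
    _ ≤ (B.card : ℝ) + ∑ u ∈ Finset.range (θ+1), ((A u).card : ℝ) * (2 * e) :=
        add_le_add hABsum (Finset.sum_le_sum fun u _ => hCbound u)
    _ ≤ 2 * 3 ^ θ * e + 3 ^ θ * (2 * e) := by
        apply add_le_add hBcard
        rw [← Finset.sum_mul]
        apply mul_le_mul_of_nonneg_right hsum_le (by positivity)
    _ = 4 * 3 ^ θ * Real.exp (-(b ^ 2) / (2 * θ)) := by rw [← he]; ring

lemma lazyPath_eq (ω : Fin θ → Fin 3) (u : ℕ) :
    lazyPath θ 0 ω u = X (Tlt θ u) ω := by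
  rw [lazyPath, X, Tlt, Finset.sum_filter, zero_add]

lemma abs_X_le (T : Finset (Fin θ)) (ω : Fin θ → Fin 3) : |X T ω| ≤ θ := by
  calc |X T ω| ≤ ∑ j ∈ T, |((ω j : ℤ) - 1)| := Finset.abs_sum_le_sum_abs _ _
    _ ≤ ∑ _j ∈ T, 1 := by
        apply Finset.sum_le_sum
        intro j _
        have := (ω j).isLt
        interval_cases h : ((ω j : ℕ)) <;> simp_all <;> omega
    _ = T.card := by simp
    _ ≤ (θ : ℤ) := by
        have := Finset.card_le_card (Finset.subset_univ T)
        simp only [Finset.card_univ, Fintype.card_fin] at this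
        exact_mod_cast this

lemma lazyPath_zero (ω : Fin θ → Fin 3) : lazyPath θ 0 ω 0 = 0 := by
  simp [lazyPath]

lemma pathRange_nonneg (ω : Fin θ → Fin 3) : 0 ≤ pathRange θ 0 ω := by
  rw [pathRange]
  have h0 : (0:ℕ) ∈ Finset.range (θ+1) := by simp
  have hsup : lazyPath θ 0 ω 0 ≤ (Finset.range (θ + 1)).sup' Finset.nonempty_range_add_one
      (fun u => lazyPath θ 0 ω u) := Finset.le_sup' _ h0
  have hinf : (Finset.range (θ + 1)).inf' Finset.nonempty_range_add_one
      (fun u => lazyPath θ 0 ω u) ≤ lazyPath θ 0 ω 0 := Finset.inf'_le _ h0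
  rw [lazyPath_zero] at hsup hinf
  omega

lemma pathRange_le (ω : Fin θ → Fin 3) : pathRange θ 0 ω ≤ 2 * θ := by
  rw [pathRange]
  obtain ⟨u1, -, hu1⟩ := Finset.exists_mem_eq_sup' (Finset.nonempty_range_add_one (n := θ))
    (fun u => lazyPath θ 0 ω u)
  obtain ⟨u2, -, hu2⟩ := Finset.exists_mem_eq_inf' (Finset.nonempty_range_add_one (n := θ))
    (fun u => lazyPath θ 0 ω u)
  rw [hu1, hu2, lazyPath_eq, lazyPath_eq]
  have h1 := abs_X_le (Tlt θ u1) ω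
  have h2 := abs_X_le (Tlt θ u2) ω
  have h3 := le_abs_self (X (Tlt θ u1) ω)
  have h4 := neg_le_abs (X (Tlt θ u2) ω)
  linarith

lemma range_big (ω : Fin θ → Fin 3) (a : ℝ) (ha : a ≤ ((pathRange θ 0 ω : ℤ) : ℝ)) :
    ∃ u, u ≤ θ ∧ a / 2 ≤ |((X (Tlt θ u) ω : ℤ) : ℝ)| := by
  obtain ⟨u1, hu1m, hu1⟩ := Finset.exists_mem_eq_sup' (Finset.nonempty_range_add_one (n := θ))
    (fun u => lazyPath θ 0 ω u)
  obtain ⟨u2, hu2m, hu2⟩ := Finset.exists_mem_eq_inf' (Finset.nonempty_range_add_one (n := θ))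
    (fun u => lazyPath θ 0 ω u)
  rw [Finset.mem_range] at hu1m hu2m
  have hRdef : pathRange θ 0 ω = X (Tlt θ u1) ω - X (Tlt θ u2) ω := by
    rw [pathRange, hu1, hu2, lazyPath_eq, lazyPath_eq]
  by_cases h : a / 2 ≤ |((X (Tlt θ u1) ω : ℤ) : ℝ)|
  · exact ⟨u1, by omega, h⟩
  · refine ⟨u2, by omega, ?_⟩
    push_neg at h
    have hcast : ((pathRange θ 0 ω : ℤ) : ℝ)
        = ((X (Tlt θ u1) ω : ℤ) : ℝ) - ((X (Tlt θ u2) ω : ℤ) : ℝ) := by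
      rw [hRdef]; push_cast; ring
    have habs1 : ((X (Tlt θ u1) ω : ℤ) : ℝ) ≤ |((X (Tlt θ u1) ω : ℤ) : ℝ)| := le_abs_self _
    have habs2 : -((X (Tlt θ u2) ω : ℤ) : ℝ) ≤ |((X (Tlt θ u2) ω : ℤ) : ℝ)| := neg_le_abs _
    linarith [hcast ▸ ha]

/-- Numeric bound: the Gaussian beats the stretched exponential. -/
lemma poly_bound (t c r : ℝ) (ht : 0 < t) (hc : 0 < c) (hr0 : 0 < r) (hr2 : r < 2) :
    ∃ C : ℝ, 0 ≤ C ∧ ∀ j : ℕ,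
      c * ((j : ℝ) + 1) ^ r ≤ (j : ℝ) ^ 2 / (72 * t) + C - j := by
  set Y : ℝ := max 2 (max ((576 * t * c) ^ (1 / (2 - r))) (576 * t)) with hY
  have hY2 : (2:ℝ) ≤ Y := le_max_left _ _
  have hY0 : (0:ℝ) < Y := by linarith
  refine ⟨c * Y ^ r + Y, by positivity, ?_⟩
  intro j
  set y : ℝ := (j : ℝ) + 1 with hy
  have hy1 : (1:ℝ) ≤ y := by
    rw [hy]
    have : (0:ℝ) ≤ (j:ℝ) := Nat.cast_nonneg j
    linarith
  have hy0 : (0:ℝ) < y := by linarith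
  have hjy : (j : ℝ) = y - 1 := by rw [hy]; ring
  rw [hjy]
  rcases le_or_gt y Y with hcase | hcase
  · -- small y : bound by constant
    have h1 : c * y ^ r ≤ c * Y ^ r := by
      apply mul_le_mul_of_nonneg_left _ hc.le
      exact Real.rpow_le_rpow (by linarith) hcase hr0.le
    have h2 : (0:ℝ) ≤ (y - 1) ^ 2 / (72 * t) := by positivity
    nlinarith
  · -- large y : Gaussian term dominates
    have hyY : Y ≤ y := hcase.le
    have hy2 : (2:ℝ) ≤ y := le_trans hY2 hyY
    -- y ≤ y^2 / (576 t)
    have hlin : y ≤ y ^ 2 / (576 * t) := by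
      rw [le_div_iff₀ (by positivity)]
      have h576 : 576 * t ≤ y := le_trans (le_trans (le_max_right _ _) (le_max_right _ _)) hyY
      nlinarith
    -- c y^r ≤ y^2 / (576 t)
    have hrp : c * y ^ r ≤ y ^ 2 / (576 * t) := by
      have hA : (0:ℝ) < 576 * t * c := by positivity
      have hyA : (576 * t * c) ^ (1 / (2 - r)) ≤ y :=
        le_trans (le_trans (le_max_left _ _) (le_max_right _ _)) hyY
      have h2r : (0:ℝ) < 2 - r := by linarith
      have hpow : 576 * t * c ≤ y ^ (2 - r) := by
        calc 576 * t * c = ((576 * t * c) ^ (1 / (2 - r))) ^ (2 - r) := by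
              rw [← Real.rpow_mul hA.le, one_div, inv_mul_cancel₀ h2r.ne', Real.rpow_one]
          _ ≤ y ^ (2 - r) := Real.rpow_le_rpow (Real.rpow_nonneg hA.le _) hyA h2r.le
      have hysq : y ^ r * y ^ (2 - r) = y ^ 2 := by
        rw [← Real.rpow_add hy0, ← Real.rpow_natCast y 2]
        norm_num
      rw [le_div_iff₀ (by positivity)]
      calc c * y ^ r * (576 * t) = (576 * t * c) * y ^ r := by ring
        _ ≤ y ^ (2 - r) * y ^ r := by
            apply mul_le_mul_of_nonneg_right hpow (Real.rpow_nonneg hy0.le r)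
        _ = y ^ 2 := by rw [mul_comm]; exact hysq
    have hsq : y ^ 2 / (288 * t) ≤ (y - 1) ^ 2 / (72 * t) := by
      rw [div_le_div_iff₀ (by positivity) (by positivity)]
      have hkey : (0:ℝ) ≤ 72 * t * ((y - 2) * (3 * y - 2)) :=
        mul_nonneg (by positivity) (mul_nonneg (by linarith) (by linarith))
      nlinarith [hkey]
    have hC0 : (0:ℝ) ≤ c * Y ^ r + Y := by positivity
    have hcomb : y ^ 2 / (576 * t) + y ^ 2 / (576 * t) = y ^ 2 / (288 * t) := by
      field_simp; ring
    nlinarith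

lemma main_bound (t c r C : ℝ) (ht : 0 < t) (hc : 0 < c) (hr0 : 0 < r) (hr2 : r < 2)
    (hC0 : 0 ≤ C)
    (hC : ∀ j : ℕ, c * ((j : ℝ) + 1) ^ r ≤ (j : ℝ) ^ 2 / (72 * t) + C - j)
    (m : ℝ) (hm : 1 ≤ m) (θ : ℕ) (hθle : (θ : ℝ) ≤ m ^ 2 * t) :
    (∑ ω : Fin θ → Fin 3, Real.exp (c * (((pathRange θ 0 ω : ℤ) : ℝ) / m) ^ r)) / 3 ^ θ
      ≤ 8 * Real.exp C := by
  have hm0 : (0:ℝ) < m := lt_of_lt_of_le one_pos hm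
  have hexpC1 : (1:ℝ) ≤ Real.exp C := Real.one_le_exp hC0
  rcases Nat.eq_zero_or_pos θ with hθ0 | hθpos
  · subst hθ0
    have hR : ∀ ω : Fin 0 → Fin 3, pathRange 0 0 ω = 0 := by
      intro ω
      rw [pathRange]
      simp [lazyPath]
    have hsum : (∑ ω : Fin 0 → Fin 3, Real.exp (c * (((pathRange 0 0 ω : ℤ) : ℝ) / m) ^ r))
        = ∑ _ω : Fin 0 → Fin 3, 1 := by
      apply Finset.sum_congr rfl
      intro ω _
      rw [hR ω]
      rw [show ((((0:ℤ):ℝ)) / m) = 0 by norm_num, Real.zero_rpow hr0.ne', mul_zero,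
        Real.exp_zero]
    rw [hsum, Finset.sum_const, Finset.card_univ]
    have hcard1 : Fintype.card (Fin 0 → Fin 3) = 1 := by simp
    rw [hcard1, pow_zero]
    norm_num
    linarith
  · have hθR : (0:ℝ) < θ := by exact_mod_cast hθpos
    have h3pos : (0:ℝ) < (3:ℝ) ^ θ := by positivity
    rw [div_le_iff₀ h3pos]
    set J : (Fin θ → Fin 3) → ℕ := fun ω => ⌊((pathRange θ 0 ω : ℤ) : ℝ) / m⌋₊ with hJ
    have hRnn : ∀ ω : Fin θ → Fin 3, (0:ℝ) ≤ ((pathRange θ 0 ω : ℤ) : ℝ) := by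
      intro ω; exact_mod_cast pathRange_nonneg ω
    have hdivnn : ∀ ω : Fin θ → Fin 3, (0:ℝ) ≤ ((pathRange θ 0 ω : ℤ) : ℝ) / m :=
      fun ω => div_nonneg (hRnn ω) hm0.le
    have hmaps : ∀ ω ∈ (univ : Finset (Fin θ → Fin 3)), J ω ∈ Finset.range (2*θ+1) := by
      intro ω _
      rw [Finset.mem_range, Nat.lt_succ_iff]
      have h1 : ((pathRange θ 0 ω : ℤ) : ℝ) / m ≤ ((2*θ : ℕ) : ℝ) := by
        calc ((pathRange θ 0 ω : ℤ) : ℝ) / m ≤ ((pathRange θ 0 ω : ℤ) : ℝ) :=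
              div_le_self (hRnn ω) hm
          _ ≤ ((2*θ : ℕ) : ℝ) := by exact_mod_cast pathRange_le ω
      calc J ω ≤ ⌊((2*θ : ℕ) : ℝ)⌋₊ := Nat.floor_mono h1
        _ = 2*θ := Nat.floor_natCast _
    rw [← Finset.sum_fiberwise_of_maps_to hmaps
      (fun ω => Real.exp (c * (((pathRange θ 0 ω : ℤ) : ℝ) / m) ^ r))]
    have hfiber : ∀ j ∈ Finset.range (2*θ+1),
        (∑ ω ∈ univ.filter (fun ω => J ω = j),
          Real.exp (c * (((pathRange θ 0 ω : ℤ) : ℝ) / m) ^ r))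
        ≤ 4 * 3 ^ θ * (Real.exp C * (1/2 : ℝ) ^ j) := by
      intro j _
      have hb : (0:ℝ) ≤ (j:ℝ) * m / 6 := by positivity
      -- pointwise bound on the fiber
      have hpt : ∀ ω ∈ univ.filter (fun ω => J ω = j),
          Real.exp (c * (((pathRange θ 0 ω : ℤ) : ℝ) / m) ^ r)
            ≤ Real.exp (c * ((j:ℝ) + 1) ^ r) := by
        intro ω hω
        rw [Finset.mem_filter] at hω
        apply Real.exp_le_exp.2
        apply mul_le_mul_of_nonneg_left _ hc.le
        apply Real.rpow_le_rpow (hdivnn ω) _ hr0.le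
        have hlt := Nat.lt_floor_add_one (((pathRange θ 0 ω : ℤ) : ℝ) / m)
        rw [← hω.2]
        exact le_of_lt hlt
      -- cardinality bound on the fiber
      have hsubset : univ.filter (fun ω : Fin θ → Fin 3 => J ω = j)
          ⊆ univ.filter (fun ω => ∃ u, u ≤ θ ∧ 3 * ((j:ℝ) * m / 6) ≤ |((X (Tlt θ u) ω : ℤ) : ℝ)|) := by
        intro ω hω
        rw [Finset.mem_filter] at hω ⊢
        refine ⟨Finset.mem_univ _, ?_⟩
        have hjle : (j:ℝ) ≤ ((pathRange θ 0 ω : ℤ) : ℝ) / m := by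
          rw [← hω.2]
          exact Nat.floor_le (hdivnn ω)
        have hjm : (j:ℝ) * m ≤ ((pathRange θ 0 ω : ℤ) : ℝ) := by
          rw [← le_div_iff₀ hm0]
          exact hjle
        obtain ⟨u, hu, habs⟩ := range_big ω ((j:ℝ) * m) hjm
        refine ⟨u, hu, ?_⟩
        calc 3 * ((j:ℝ) * m / 6) = (j:ℝ) * m / 2 := by ring
          _ ≤ _ := habs
      have hcard : ((univ.filter (fun ω : Fin θ → Fin 3 => J ω = j)).card : ℝ)
          ≤ 4 * 3 ^ θ * Real.exp (-(((j:ℝ) * m / 6) ^ 2) / (2 * θ)) := by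
        calc ((univ.filter (fun ω : Fin θ → Fin 3 => J ω = j)).card : ℝ)
            ≤ _ := by exact_mod_cast Finset.card_le_card hsubset
          _ ≤ _ := etemadi hθpos ((j:ℝ) * m / 6) hb
      -- combine
      calc (∑ ω ∈ univ.filter (fun ω => J ω = j),
            Real.exp (c * (((pathRange θ 0 ω : ℤ) : ℝ) / m) ^ r))
          ≤ ∑ _ω ∈ univ.filter (fun ω : Fin θ → Fin 3 => J ω = j),
            Real.exp (c * ((j:ℝ) + 1) ^ r) := Finset.sum_le_sum hpt
        _ = ((univ.filter (fun ω : Fin θ → Fin 3 => J ω = j)).card : ℝ)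
            * Real.exp (c * ((j:ℝ) + 1) ^ r) := by
            rw [Finset.sum_const, nsmul_eq_mul]
        _ ≤ (4 * 3 ^ θ * Real.exp (-(((j:ℝ) * m / 6) ^ 2) / (2 * θ)))
            * Real.exp (c * ((j:ℝ) + 1) ^ r) :=
            mul_le_mul_of_nonneg_right hcard (Real.exp_nonneg _)
        _ = 4 * 3 ^ θ * Real.exp (-(((j:ℝ) * m / 6) ^ 2) / (2 * θ) + c * ((j:ℝ) + 1) ^ r) := by
            rw [mul_assoc, ← Real.exp_add]
        _ ≤ 4 * 3 ^ θ * Real.exp (C - j) := by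
            apply mul_le_mul_of_nonneg_left _ (by positivity)
            apply Real.exp_le_exp.2
            have hgauss : ((j:ℝ))^2 / (72*t) ≤ (((j:ℝ) * m / 6) ^ 2) / (2 * θ) := by
              rw [div_le_div_iff₀ (by positivity) (by positivity)]
              have hmul := mul_le_mul_of_nonneg_left hθle (sq_nonneg (j:ℝ))
              nlinarith [hmul, ht.le]
            have := hC j
            rw [neg_div]
            linarith
        _ ≤ 4 * 3 ^ θ * (Real.exp C * (1/2 : ℝ) ^ j) := by
            apply mul_le_mul_of_nonneg_left _ (by positivity)
            have h1 : Real.exp (-(j:ℝ)) ≤ (1/2 : ℝ) ^ j := by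
              have hj : Real.exp (-(j:ℝ)) = (Real.exp (-1)) ^ j := by
                rw [← Real.exp_nat_mul]; ring_nf
              rw [hj]
              apply pow_le_pow_left₀ (Real.exp_nonneg _)
              rw [Real.exp_neg]
              have h2e : (2:ℝ) ≤ Real.exp 1 := by
                have := Real.add_one_le_exp (1:ℝ)
                linarith
              calc (Real.exp 1)⁻¹ ≤ (2:ℝ)⁻¹ := inv_anti₀ (by norm_num) h2e
                _ = 1/2 := by norm_num
            have h2 : Real.exp (C - (j:ℝ)) = Real.exp C * Real.exp (-(j:ℝ)) := by
              rw [← Real.exp_add]; ring_nf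
            rw [h2]
            exact mul_le_mul_of_nonneg_left h1 (Real.exp_nonneg C)
    calc (∑ j ∈ Finset.range (2*θ+1), ∑ ω ∈ univ.filter (fun ω => J ω = j),
          Real.exp (c * (((pathRange θ 0 ω : ℤ) : ℝ) / m) ^ r))
        ≤ ∑ j ∈ Finset.range (2*θ+1), 4 * 3 ^ θ * (Real.exp C * (1/2 : ℝ) ^ j) :=
          Finset.sum_le_sum hfiber
      _ = 4 * 3 ^ θ * Real.exp C * ∑ j ∈ Finset.range (2*θ+1), (1/2 : ℝ) ^ j := by
          rw [Finset.mul_sum]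
          apply Finset.sum_congr rfl
          intro j _
          ring
      _ ≤ 4 * 3 ^ θ * Real.exp C * 2 := by
          apply mul_le_mul_of_nonneg_left (sum_geometric_two_le _) (by positivity)
      _ = 8 * Real.exp C * 3 ^ θ := by ring

end RangeAux

/-- Uniform (in `m ≥ 1`) exponential moment bound for `c·(R_θ/m)^r`,
`0 < r < 2`, where `R_θ` is the range of the lazy random walk of length `θ = ⌊m²t⌋`
started at `0`.  The expectation is the sum over all increment sequences divided
by `3^θ`. -/
theorem range_uniform_exponential_moments :
    ∀ t : ℝ, 0 < t → ∀ c : ℝ, 0 < c → ∀ r : ℝ, 0 < r → r < 2 →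
      ∃ K : ℝ, ∀ m : ℝ, 1 ≤ m →
        (∑ ω : Fin ⌊m ^ 2 * t⌋₊ → Fin 3,
            Real.exp (c * ((pathRange ⌊m ^ 2 * t⌋₊ 0 ω : ℝ) / m) ^ r))
          / 3 ^ ⌊m ^ 2 * t⌋₊ ≤ K := by
  intro t ht c hc r hr0 hr2
  obtain ⟨C, hC0, hC⟩ := RangeAux.poly_bound t c r ht hc hr0 hr2
  refine ⟨8 * Real.exp C, ?_⟩
  intro m hm
  exact RangeAux.main_bound t c r C ht hc hr0 hr2 hC0 hC m hm ⌊m ^ 2 * t⌋₊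
    (Nat.floor_le (by positivity))
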